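/- Under Assumptions 1, 2 and 3(b), the Hessian of G at Γ_m is Lipschitz in the location parameter in the following sense: for all h ∈ ℝ^d and all V ∈ S(H), ‖(∇²G_{m+h}(Γ_m) − ∇²G_m(Γ_m))(V)‖_F ≤ 12(C√‖Γ_m‖_F + C^{3/4}) ‖h‖ ‖V‖_F. -/

import Mathlib

open MeasureTheory ProbabilityTheory Filter
open scoped ENNReal NNReal RealInnerProductSpace BigOperators

noncomputable section

/-- The space `S(H)` of `d × d` real matrices, viewed as a Euclidean space, so that its
norm is the Frobenius norm and its inner product `⟪A, B⟫ = ∑ i j, A i j * B i j = tr (Aᵀ B)`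
is the Frobenius inner product. -/
abbrev Mat (d : ℕ) := EuclideanSpace ℝ (Fin d × Fin d)

/-- `Y(h) = (x − h)(x − h)ᵀ`. -/
def Ymat {d : ℕ} (x h : EuclideanSpace ℝ (Fin d)) : Mat d :=
  (WithLp.equiv 2 _).symm (fun p => (x p.1 - h p.1) * (x p.2 - h p.2))

variable {d : ℕ} {Ω : Type*} [MeasurableSpace Ω]

/-- `G_h(V) = E[‖Y(h) − V‖_F − ‖Y(h)‖_F]`. -/
def Gfun (P : Measure Ω) (X : Ω → EuclideanSpace ℝ (Fin d))
    (h : EuclideanSpace ℝ (Fin d)) (V : Mat d) : ℝ :=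
  ∫ ω, (‖Ymat (X ω) h - V‖ - ‖Ymat (X ω) h‖) ∂P

/-- The gradient `∇G_h(V) = −E[(Y(h) − V)/‖Y(h) − V‖_F]`. -/
def gradG (P : Measure Ω) (X : Ω → EuclideanSpace ℝ (Fin d))
    (h : EuclideanSpace ℝ (Fin d)) (V : Mat d) : Mat d :=
  - ∫ ω, ‖Ymat (X ω) h - V‖⁻¹ • (Ymat (X ω) h - V) ∂P

/-- The Hessian operator
`∇²G_h(V)(A) = E[(1/‖Y(h) − V‖_F)(A − ⟪Y(h) − V, A⟫_F (Y(h) − V)/‖Y(h) − V‖_F²)]`. -/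
def hessG (P : Measure Ω) (X : Ω → EuclideanSpace ℝ (Fin d))
    (h : EuclideanSpace ℝ (Fin d)) (V : Mat d) (A : Mat d) : Mat d :=
  ∫ ω, ‖Ymat (X ω) h - V‖⁻¹ •
    (A - (‖Ymat (X ω) h - V‖ ^ 2)⁻¹ • (⟪Ymat (X ω) h - V, A⟫ • (Ymat (X ω) h - V))) ∂P

/-! ### Auxiliary lemmas -/

lemma key_pointwise {F : Type*} [NormedAddCommGroup F] [InnerProductSpace ℝ F]
    (U W A : F) (hU : U ≠ 0) (hW : W ≠ 0) :
    ‖(‖U‖⁻¹ • (A - (‖U‖ ^ 2)⁻¹ • ((⟪U, A⟫) • U))) -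
      (‖W‖⁻¹ • (A - (‖W‖ ^ 2)⁻¹ • ((⟪W, A⟫) • W)))‖ ≤
      6 / (‖U‖ * ‖W‖) * ‖U - W‖ * ‖A‖ := by
  have hnU : (0:ℝ) < ‖U‖ := norm_pos_iff.mpr hU
  have hnW : (0:ℝ) < ‖W‖ := norm_pos_iff.mpr hW
  set u : F := ‖U‖⁻¹ • U with hu_def
  set w : F := ‖W‖⁻¹ • W with hw_def
  have hu : ‖u‖ = 1 := norm_smul_inv_norm hU
  have hw : ‖w‖ = 1 := norm_smul_inv_norm hW
  set D : ℝ := ‖U - W‖ with hD_def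
  have hD : 0 ≤ D := norm_nonneg _
  have hrwU : ‖U‖⁻¹ • (A - (‖U‖ ^ 2)⁻¹ • ((⟪U, A⟫) • U)) =
      ‖U‖⁻¹ • A - ‖U‖⁻¹ • ((⟪u, A⟫) • u) := by
    rw [hu_def, real_inner_smul_left]
    match_scalars
    field_simp
    ring
  have hrwW : ‖W‖⁻¹ • (A - (‖W‖ ^ 2)⁻¹ • ((⟪W, A⟫) • W)) =
      ‖W‖⁻¹ • A - ‖W‖⁻¹ • ((⟪w, A⟫) • w) := by
    rw [hw_def, real_inner_smul_left]
    match_scalars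
    field_simp
    ring
  rw [hrwU, hrwW]
  have hsplit : (‖U‖⁻¹ • A - ‖U‖⁻¹ • ((⟪u, A⟫) • u)) -
      (‖W‖⁻¹ • A - ‖W‖⁻¹ • ((⟪w, A⟫) • w)) =
      (‖U‖⁻¹ - ‖W‖⁻¹) • A - ((‖U‖⁻¹ - ‖W‖⁻¹) • ((⟪u, A⟫) • u)
        + ‖W‖⁻¹ • ((⟪u, A⟫ - ⟪w, A⟫) • u) + ‖W‖⁻¹ • ((⟪w, A⟫) • (u - w))) := by
    module
  rw [hsplit]
  have h1 : |‖U‖⁻¹ - ‖W‖⁻¹| ≤ D / (‖U‖ * ‖W‖) := by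
    have : ‖U‖⁻¹ - ‖W‖⁻¹ = (‖W‖ - ‖U‖) / (‖U‖ * ‖W‖) := by field_simp
    rw [this, abs_div, abs_of_pos (show (0:ℝ) < ‖U‖ * ‖W‖ by positivity)]
    gcongr
    calc |‖W‖ - ‖U‖| ≤ ‖W - U‖ := abs_norm_sub_norm_le W U
      _ = D := by rw [hD_def, norm_sub_rev]
  have h2 : ‖u - w‖ ≤ 2 * D / ‖U‖ := by
    have hid : u - w = ‖U‖⁻¹ • (U - W) + (‖U‖⁻¹ - ‖W‖⁻¹) • W := by
      rw [hu_def, hw_def]; module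
    calc ‖u - w‖ ≤ ‖‖U‖⁻¹ • (U - W)‖ + ‖(‖U‖⁻¹ - ‖W‖⁻¹) • W‖ := by
          rw [hid]; exact norm_add_le _ _
      _ = ‖U‖⁻¹ * D + |‖U‖⁻¹ - ‖W‖⁻¹| * ‖W‖ := by
          rw [norm_smul, norm_smul, Real.norm_eq_abs, Real.norm_eq_abs,
            abs_of_pos (by positivity)]
      _ ≤ ‖U‖⁻¹ * D + (D / (‖U‖ * ‖W‖)) * ‖W‖ := by
          gcongr
      _ = 2 * D / ‖U‖ := by field_simp; ring
  have hiA : |⟪u, A⟫| ≤ ‖A‖ := by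
    calc |⟪u, A⟫| ≤ ‖u‖ * ‖A‖ := abs_real_inner_le_norm u A
      _ = ‖A‖ := by rw [hu, one_mul]
  have hwA : |⟪w, A⟫| ≤ ‖A‖ := by
    calc |⟪w, A⟫| ≤ ‖w‖ * ‖A‖ := abs_real_inner_le_norm w A
      _ = ‖A‖ := by rw [hw, one_mul]
  have hdiff : |⟪u, A⟫ - ⟪w, A⟫| ≤ (2 * D / ‖U‖) * ‖A‖ := by
    rw [← inner_sub_left]
    calc |⟪u - w, A⟫| ≤ ‖u - w‖ * ‖A‖ := abs_real_inner_le_norm _ _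
      _ ≤ (2 * D / ‖U‖) * ‖A‖ := by gcongr
  calc ‖(‖U‖⁻¹ - ‖W‖⁻¹) • A - ((‖U‖⁻¹ - ‖W‖⁻¹) • ((⟪u, A⟫) • u)
        + ‖W‖⁻¹ • ((⟪u, A⟫ - ⟪w, A⟫) • u) + ‖W‖⁻¹ • ((⟪w, A⟫) • (u - w)))‖
      ≤ ‖(‖U‖⁻¹ - ‖W‖⁻¹) • A‖ + (‖(‖U‖⁻¹ - ‖W‖⁻¹) • ((⟪u, A⟫) • u)‖
        + ‖‖W‖⁻¹ • ((⟪u, A⟫ - ⟪w, A⟫) • u)‖ + ‖‖W‖⁻¹ • ((⟪w, A⟫) • (u - w))‖) := by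
        refine (norm_sub_le _ _).trans ?_
        gcongr
        exact (norm_add_le _ _).trans (by gcongr; exact norm_add_le _ _)
    _ ≤ (D / (‖U‖ * ‖W‖)) * ‖A‖ + ((D / (‖U‖ * ‖W‖)) * ‖A‖
        + ‖W‖⁻¹ * ((2 * D / ‖U‖) * ‖A‖) + ‖W‖⁻¹ * (‖A‖ * (2 * D / ‖U‖))) := by
        gcongr ?_ + (?_ + ?_ + ?_)
        · rw [norm_smul, Real.norm_eq_abs]; gcongr
        · rw [norm_smul, norm_smul, Real.norm_eq_abs, Real.norm_eq_abs, hu, mul_one]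
          exact mul_le_mul h1 hiA (abs_nonneg _) (by positivity)
        · rw [norm_smul, norm_smul, Real.norm_eq_abs, Real.norm_eq_abs, hu, mul_one,
            abs_of_pos (by positivity : (0:ℝ) < ‖W‖⁻¹)]
          gcongr
        · rw [norm_smul, norm_smul, Real.norm_eq_abs, Real.norm_eq_abs,
            abs_of_pos (by positivity : (0:ℝ) < ‖W‖⁻¹)]
          gcongr ‖W‖⁻¹ * ?_
          exact mul_le_mul hwA h2 (norm_nonneg _) (norm_nonneg _)
    _ = 6 / (‖U‖ * ‖W‖) * D * ‖A‖ := by field_simp; ring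

lemma Ymat_apply {d : ℕ} (x h : EuclideanSpace ℝ (Fin d)) (p : Fin d × Fin d) :
    Ymat x h p = (x p.1 - h p.1) * (x p.2 - h p.2) := rfl

lemma norm_Ymat {d : ℕ} (x h : EuclideanSpace ℝ (Fin d)) :
    ‖Ymat x h‖ = ‖x - h‖ ^ 2 := by
  have key : (∑ p : Fin d × Fin d, ‖Ymat x h p‖ ^ 2) = (∑ i, ‖(x - h) i‖ ^ 2) ^ 2 := by
    simp only [Ymat_apply, Real.norm_eq_abs, sq_abs, mul_pow,
      show ∀ i, (x - h) i = x i - h i from fun _ => rfl]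
    rw [Fintype.sum_prod_type, sq, Finset.sum_mul_sum]
  have hS : (0:ℝ) ≤ ∑ i, ‖(x - h) i‖ ^ 2 := by positivity
  rw [EuclideanSpace.norm_eq, EuclideanSpace.norm_eq, key, Real.sqrt_sq hS]
  rw [Real.sq_sqrt hS]

def outer {d : ℕ} (u v : EuclideanSpace ℝ (Fin d)) : Mat d :=
  (WithLp.equiv 2 _).symm (fun p => u p.1 * v p.2)

lemma norm_outer {d : ℕ} (u v : EuclideanSpace ℝ (Fin d)) :
    ‖outer u v‖ = ‖u‖ * ‖v‖ := by
  have key : (∑ p : Fin d × Fin d, ‖outer u v p‖ ^ 2) =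
      (∑ i, ‖u i‖ ^ 2) * (∑ j, ‖v j‖ ^ 2) := by
    simp only [Real.norm_eq_abs, sq_abs, show ∀ p, outer u v p = u p.1 * v p.2 from fun _ => rfl,
      mul_pow]
    rw [Fintype.sum_prod_type, Finset.sum_mul_sum]
  rw [EuclideanSpace.norm_eq, EuclideanSpace.norm_eq, EuclideanSpace.norm_eq, key,
    Real.sqrt_mul (by positivity)]

lemma Ymat_sub_Ymat {d : ℕ} (x m h : EuclideanSpace ℝ (Fin d)) :
    Ymat x (m + h) - Ymat x m = -(outer h (x - (m + h))) - outer (x - m) h := by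
  ext p
  show Ymat x (m+h) p - Ymat x m p = -(outer h (x - (m+h)) p) - outer (x-m) h p
  show (x p.1 - (m p.1 + h p.1)) * (x p.2 - (m p.2 + h p.2)) - (x p.1 - m p.1)*(x p.2 - m p.2)
    = -(h p.1 * (x p.2 - (m p.2 + h p.2))) - (x p.1 - m p.1) * h p.2
  ring

lemma norm_Ymat_sub_Ymat {d : ℕ} (x m h : EuclideanSpace ℝ (Fin d)) :
    ‖Ymat x (m + h) - Ymat x m‖ ≤
      ‖h‖ * (Real.sqrt ‖Ymat x (m + h)‖ + Real.sqrt ‖Ymat x m‖) := by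
  rw [Ymat_sub_Ymat]
  calc ‖-(outer h (x - (m + h))) - outer (x - m) h‖
      ≤ ‖-(outer h (x - (m+h)))‖ + ‖outer (x - m) h‖ := norm_sub_le _ _
    _ = ‖h‖ * ‖x - (m+h)‖ + ‖x - m‖ * ‖h‖ := by rw [norm_neg, norm_outer, norm_outer]
    _ = ‖h‖ * (Real.sqrt ‖Ymat x (m + h)‖ + Real.sqrt ‖Ymat x m‖) := by
        rw [norm_Ymat, norm_Ymat, Real.sqrt_sq (norm_nonneg _), Real.sqrt_sq (norm_nonneg _)]
        ring

lemma lint_one {α : Type*} [MeasurableSpace α] (μ : Measure α) [IsProbabilityMeasure μ]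
    {b : α → ℝ≥0∞} (hb : Measurable b) {c : ℝ≥0∞}
    (h2b : ∫⁻ x, (b x) ^ (2:ℝ) ∂μ ≤ c) :
    ∫⁻ x, (b x) ^ ((4:ℝ)/3) ∂μ ≤ c ^ ((2:ℝ)/3) := by
  have hpq : Real.HolderConjugate (3/2) 3 := Real.holderConjugate_iff.mpr ⟨by norm_num, by norm_num⟩
  have hb' : Measurable fun x => (b x) ^ ((4:ℝ)/3) :=
    (ENNReal.continuous_rpow_const.measurable).comp hb
  have H := ENNReal.lintegral_mul_le_Lp_mul_Lq μ hpq hb'.aemeasurable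
    (aemeasurable_const (b := (1:ℝ≥0∞)))
  simp only [Pi.mul_apply, mul_one, ENNReal.one_rpow, lintegral_one, measure_univ,
    ENNReal.one_rpow, mul_one] at H
  have e1 : (∫⁻ x, ((b x) ^ ((4:ℝ)/3)) ^ ((3:ℝ)/2) ∂μ) = ∫⁻ x, (b x) ^ (2:ℝ) ∂μ := by
    refine lintegral_congr fun x => ?_
    rw [← ENNReal.rpow_mul]
    norm_num
  rw [e1] at H
  refine H.trans ?_
  have : (1:ℝ)/((3:ℝ)/2) = (2:ℝ)/3 := by norm_num
  rw [this]
  exact ENNReal.rpow_le_rpow h2b (by norm_num)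

lemma holder_34 {α : Type*} [MeasurableSpace α] (μ : Measure α) [IsProbabilityMeasure μ]
    {a b : α → ℝ≥0∞} (ha : Measurable a) (hb : Measurable b) {c : ℝ≥0∞}
    (hc0 : c ≠ 0) (hct : c ≠ ⊤)
    (h2a : ∫⁻ x, (a x) ^ (2:ℝ) ∂μ ≤ c) (h2b : ∫⁻ x, (b x) ^ (2:ℝ) ∂μ ≤ c) :
    ∫⁻ x, (a x) ^ ((1:ℝ)/2) * b x ∂μ ≤ c ^ ((3:ℝ)/4) := by
  have hpq : Real.HolderConjugate 4 (4/3) := Real.holderConjugate_iff.mpr ⟨by norm_num, by norm_num⟩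
  have ha' : Measurable fun x => (a x) ^ ((1:ℝ)/2) :=
    (ENNReal.continuous_rpow_const.measurable).comp ha
  have H := ENNReal.lintegral_mul_le_Lp_mul_Lq μ hpq ha'.aemeasurable hb.aemeasurable
  have e1 : (∫⁻ x, ((a x) ^ ((1:ℝ)/2)) ^ (4:ℝ) ∂μ) = ∫⁻ x, (a x) ^ (2:ℝ) ∂μ := by
    refine lintegral_congr fun x => ?_
    rw [← ENNReal.rpow_mul]; norm_num
  calc ∫⁻ x, (a x) ^ ((1:ℝ)/2) * b x ∂μ
      ≤ (∫⁻ x, ((a x) ^ ((1:ℝ)/2)) ^ (4:ℝ) ∂μ) ^ (1/(4:ℝ))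
        * (∫⁻ x, (b x) ^ ((4:ℝ)/3) ∂μ) ^ (1/((4:ℝ)/3)) := H
    _ ≤ c ^ (1/(4:ℝ)) * (c ^ ((2:ℝ)/3)) ^ (1/((4:ℝ)/3)) := by
        rw [e1]
        exact mul_le_mul' (ENNReal.rpow_le_rpow h2a (by norm_num))
          (ENNReal.rpow_le_rpow (lint_one μ hb h2b) (by norm_num))
    _ = c ^ ((3:ℝ)/4) := by
        rw [← ENNReal.rpow_mul, ← ENNReal.rpow_add _ _ hc0 hct]
        norm_num

lemma holder_22 {α : Type*} [MeasurableSpace α] (μ : Measure α) [IsProbabilityMeasure μ]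
    {a b : α → ℝ≥0∞} (ha : Measurable a) (hb : Measurable b) {c : ℝ≥0∞}
    (hc0 : c ≠ 0) (hct : c ≠ ⊤)
    (h2a : ∫⁻ x, (a x) ^ (2:ℝ) ∂μ ≤ c) (h2b : ∫⁻ x, (b x) ^ (2:ℝ) ∂μ ≤ c) :
    ∫⁻ x, a x * b x ∂μ ≤ c := by
  have hpq : Real.HolderConjugate 2 2 := Real.holderConjugate_iff.mpr ⟨by norm_num, by norm_num⟩
  have H := ENNReal.lintegral_mul_le_Lp_mul_Lq μ hpq ha.aemeasurable hb.aemeasurable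
  calc ∫⁻ x, a x * b x ∂μ
      ≤ (∫⁻ x, (a x) ^ (2:ℝ) ∂μ) ^ (1/(2:ℝ)) * (∫⁻ x, (b x) ^ (2:ℝ) ∂μ) ^ (1/(2:ℝ)) := H
    _ ≤ c ^ (1/(2:ℝ)) * c ^ (1/(2:ℝ)) := by
        exact mul_le_mul' (ENNReal.rpow_le_rpow h2a (by norm_num))
          (ENNReal.rpow_le_rpow h2b (by norm_num))
    _ = c := by
        rw [← ENNReal.rpow_add _ _ hc0 hct]; norm_num

lemma sqrt_add_le' (x g : ℝ) (hx : 0 ≤ x) (hg : 0 ≤ g) :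
    Real.sqrt (x + g) ≤ Real.sqrt x + Real.sqrt g := by
  have h := Real.sqrt_le_sqrt (show x + g ≤ (Real.sqrt x + Real.sqrt g) ^ 2 by
    nlinarith [Real.sq_sqrt hx, Real.sq_sqrt hg, Real.sqrt_nonneg x, Real.sqrt_nonneg g])
  rwa [Real.sqrt_sq (by positivity)] at h

lemma sqrt_div_eq (xr yr : ℝ) (hx : 0 < xr) (hy : 0 < yr) :
    ENNReal.ofReal (Real.sqrt xr / (xr * yr)) =
      (ENNReal.ofReal xr⁻¹) ^ ((1:ℝ)/2) * ENNReal.ofReal yr⁻¹ := by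
  rw [ENNReal.ofReal_rpow_of_pos (by positivity), ← ENNReal.ofReal_mul (by positivity)]
  congr 1
  rw [Real.inv_rpow hx.le, ← Real.sqrt_eq_rpow]
  have hxx : Real.sqrt xr * Real.sqrt xr = xr := Real.mul_self_sqrt hx.le
  have hsx : Real.sqrt xr ≠ 0 := by positivity
  field_simp
  nlinarith [hxx]

lemma pointwise_bound {d : ℕ} (x m h : EuclideanSpace ℝ (Fin d)) (Γ V : Mat d)
    (hU : Ymat x (m + h) - Γ ≠ 0) (hW : Ymat x m - Γ ≠ 0) :
    ENNReal.ofReal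
      ‖(‖Ymat x (m + h) - Γ‖⁻¹ • (V - (‖Ymat x (m + h) - Γ‖ ^ 2)⁻¹ •
          ((⟪Ymat x (m + h) - Γ, V⟫) • (Ymat x (m + h) - Γ)))) -
        (‖Ymat x m - Γ‖⁻¹ • (V - (‖Ymat x m - Γ‖ ^ 2)⁻¹ •
          ((⟪Ymat x m - Γ, V⟫) • (Ymat x m - Γ))))‖ ≤
      ENNReal.ofReal (6 * ‖h‖ * ‖V‖) *
        (((‖Ymat x (m + h) - Γ‖₊ : ℝ≥0∞)⁻¹) ^ ((1:ℝ)/2) * (‖Ymat x m - Γ‖₊ : ℝ≥0∞)⁻¹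
          + (‖Ymat x (m + h) - Γ‖₊ : ℝ≥0∞)⁻¹ * ((‖Ymat x m - Γ‖₊ : ℝ≥0∞)⁻¹) ^ ((1:ℝ)/2)
          + ENNReal.ofReal (2 * Real.sqrt ‖Γ‖) *
            ((‖Ymat x (m + h) - Γ‖₊ : ℝ≥0∞)⁻¹ * (‖Ymat x m - Γ‖₊ : ℝ≥0∞)⁻¹)) := by
  set U : Mat d := Ymat x (m + h) - Γ with hU_def
  set W : Mat d := Ymat x m - Γ with hW_def
  have hx : (0:ℝ) < ‖U‖ := norm_pos_iff.mpr hU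
  have hy : (0:ℝ) < ‖W‖ := norm_pos_iff.mpr hW
  have hg : (0:ℝ) ≤ ‖Γ‖ := norm_nonneg _
  have hUW : U - W = Ymat x (m + h) - Ymat x m := sub_sub_sub_cancel_right _ _ _
  have hDb : ‖U - W‖ ≤ ‖h‖ * ((Real.sqrt ‖U‖ + Real.sqrt ‖Γ‖) +
      (Real.sqrt ‖W‖ + Real.sqrt ‖Γ‖)) := by
    rw [hUW]
    refine (norm_Ymat_sub_Ymat x m h).trans ?_
    have e1 : Ymat x (m + h) = U + Γ := by rw [hU_def]; abel
    have e2 : Ymat x m = W + Γ := by rw [hW_def]; abel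
    have b1 : Real.sqrt ‖Ymat x (m + h)‖ ≤ Real.sqrt ‖U‖ + Real.sqrt ‖Γ‖ := by
      rw [e1]
      exact (Real.sqrt_le_sqrt ((norm_add_le U Γ))).trans
        (sqrt_add_le' _ _ (norm_nonneg _) hg)
    have b2 : Real.sqrt ‖Ymat x m‖ ≤ Real.sqrt ‖W‖ + Real.sqrt ‖Γ‖ := by
      rw [e2]
      exact (Real.sqrt_le_sqrt ((norm_add_le W Γ))).trans
        (sqrt_add_le' _ _ (norm_nonneg _) hg)
    have hh : (0:ℝ) ≤ ‖h‖ := norm_nonneg _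
    nlinarith [b1, b2]
  have hreal : ‖(‖U‖⁻¹ • (V - (‖U‖ ^ 2)⁻¹ • ((⟪U, V⟫) • U))) -
      (‖W‖⁻¹ • (V - (‖W‖ ^ 2)⁻¹ • ((⟪W, V⟫) • W)))‖ ≤
      6 * ‖h‖ * ‖V‖ * (Real.sqrt ‖U‖ / (‖U‖ * ‖W‖) + Real.sqrt ‖W‖ / (‖U‖ * ‖W‖)
        + 2 * Real.sqrt ‖Γ‖ / (‖U‖ * ‖W‖)) := by
    refine (key_pointwise U W V hU hW).trans ?_
    have hV : (0:ℝ) ≤ ‖V‖ := norm_nonneg _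
    calc 6 / (‖U‖ * ‖W‖) * ‖U - W‖ * ‖V‖
        ≤ 6 / (‖U‖ * ‖W‖) * (‖h‖ * ((Real.sqrt ‖U‖ + Real.sqrt ‖Γ‖) +
            (Real.sqrt ‖W‖ + Real.sqrt ‖Γ‖))) * ‖V‖ := by gcongr <;> positivity
      _ = 6 * ‖h‖ * ‖V‖ * (Real.sqrt ‖U‖ / (‖U‖ * ‖W‖) + Real.sqrt ‖W‖ / (‖U‖ * ‖W‖)
            + 2 * Real.sqrt ‖Γ‖ / (‖U‖ * ‖W‖)) := by
          field_simp
          ring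
  refine (ENNReal.ofReal_le_ofReal hreal).trans ?_
  rw [ENNReal.ofReal_mul (by positivity)]
  gcongr
  rw [ENNReal.ofReal_add (by positivity) (by positivity),
    ENNReal.ofReal_add (by positivity) (by positivity)]
  have hnU : (‖U‖₊ : ℝ≥0∞)⁻¹ = ENNReal.ofReal ‖U‖⁻¹ := by
    rw [show (‖U‖₊ : ℝ≥0∞) = ENNReal.ofReal ‖U‖ from (ofReal_norm U).symm, ← ENNReal.ofReal_inv_of_pos hx]
  have hnW : (‖W‖₊ : ℝ≥0∞)⁻¹ = ENNReal.ofReal ‖W‖⁻¹ := by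
    rw [show (‖W‖₊ : ℝ≥0∞) = ENNReal.ofReal ‖W‖ from (ofReal_norm W).symm, ← ENNReal.ofReal_inv_of_pos hy]
  have t1 : ENNReal.ofReal (Real.sqrt ‖U‖ / (‖U‖ * ‖W‖)) =
      ((‖U‖₊ : ℝ≥0∞)⁻¹) ^ ((1:ℝ)/2) * (‖W‖₊ : ℝ≥0∞)⁻¹ := by
    rw [hnU, hnW]; exact sqrt_div_eq _ _ hx hy
  have t2 : ENNReal.ofReal (Real.sqrt ‖W‖ / (‖U‖ * ‖W‖)) =
      (‖U‖₊ : ℝ≥0∞)⁻¹ * ((‖W‖₊ : ℝ≥0∞)⁻¹) ^ ((1:ℝ)/2) := by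
    rw [hnU, hnW, show ‖U‖ * ‖W‖ = ‖W‖ * ‖U‖ from mul_comm _ _,
      sqrt_div_eq _ _ hy hx, mul_comm]
  have t3 : ENNReal.ofReal (2 * Real.sqrt ‖Γ‖ / (‖U‖ * ‖W‖)) =
      ENNReal.ofReal (2 * Real.sqrt ‖Γ‖) * ((‖U‖₊ : ℝ≥0∞)⁻¹ * (‖W‖₊ : ℝ≥0∞)⁻¹) := by
    rw [hnU, hnW, ← ENNReal.ofReal_mul (by positivity),
      ← ENNReal.ofReal_mul (by positivity)]
    congr 1
    field_simp
  rw [t1, t2, t3]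

lemma norm_Fmap_le {F : Type*} [NormedAddCommGroup F] [InnerProductSpace ℝ F] (Z V : F) :
    ‖‖Z‖⁻¹ • (V - (‖Z‖ ^ 2)⁻¹ • ((⟪Z, V⟫) • Z))‖ ≤ (2 * ‖V‖) * ‖Z‖⁻¹ := by
  rcases eq_or_ne Z 0 with rfl | hZ
  · simp
  · have hz : (0:ℝ) < ‖Z‖ := norm_pos_iff.mpr hZ
    rw [norm_smul, Real.norm_eq_abs, abs_of_pos (by positivity), mul_comm]
    gcongr
    have hbd : ‖(‖Z‖ ^ 2)⁻¹ • ((⟪Z, V⟫) • Z)‖ ≤ ‖V‖ := by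
      rw [norm_smul, norm_smul, Real.norm_eq_abs, Real.norm_eq_abs,
        abs_of_pos (by positivity : (0:ℝ) < (‖Z‖ ^ 2)⁻¹)]
      have h1 : |⟪Z, V⟫| ≤ ‖Z‖ * ‖V‖ := abs_real_inner_le_norm Z V
      calc (‖Z‖ ^ 2)⁻¹ * (|⟪Z, V⟫| * ‖Z‖) ≤ (‖Z‖ ^ 2)⁻¹ * ((‖Z‖ * ‖V‖) * ‖Z‖) := by gcongr
        _ = ‖V‖ := by field_simp
    calc ‖V - (‖Z‖ ^ 2)⁻¹ • ((⟪Z, V⟫) • Z)‖ ≤ ‖V‖ + ‖(‖Z‖ ^ 2)⁻¹ • ((⟪Z, V⟫) • Z)‖ :=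
          norm_sub_le _ _
      _ ≤ ‖V‖ + ‖V‖ := by gcongr
      _ = 2 * ‖V‖ := by ring

lemma measurable_Fmap {d : ℕ} (V : Mat d) :
    Measurable fun Z : Mat d => ‖Z‖⁻¹ • (V - (‖Z‖ ^ 2)⁻¹ • ((⟪Z, V⟫) • Z)) := by
  have h1 : Measurable fun Z : Mat d => ‖Z‖⁻¹ := measurable_norm.inv
  have h2 : Measurable fun Z : Mat d => (‖Z‖ ^ 2)⁻¹ := (measurable_norm.pow_const 2).inv
  have h3 : Measurable fun Z : Mat d => (⟪Z, V⟫ : ℝ) :=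
    (continuous_id.inner continuous_const).measurable
  exact h1.smul (measurable_const.sub (h2.smul (h3.smul measurable_id)))

lemma continuous_Ymat {d : ℕ} (t : EuclideanSpace ℝ (Fin d)) :
    Continuous fun x : EuclideanSpace ℝ (Fin d) => Ymat x t := by
  apply Continuous.comp (PiLp.continuous_toLp (p := 2) (β := fun _ : Fin d × Fin d => ℝ))
  apply continuous_pi
  intro p
  have hc : ∀ i : Fin d, Continuous fun x : EuclideanSpace ℝ (Fin d) => x i := fun i =>
    (continuous_apply i).comp (PiLp.continuous_ofLp (p := 2) (β := fun _ : Fin d => ℝ))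
  exact ((hc p.1).sub continuous_const).mul ((hc p.2).sub continuous_const)

lemma ofReal_inv_norm_le {F : Type*} [NormedAddCommGroup F] (z : F) :
    ENNReal.ofReal (‖z‖⁻¹) ≤ ((‖z‖₊ : ℝ≥0∞))⁻¹ := by
  rcases eq_or_ne z 0 with rfl | hz
  · simp
  · have hz' : (0:ℝ) < ‖z‖ := norm_pos_iff.mpr hz
    rw [show (‖z‖₊ : ℝ≥0∞) = ENNReal.ofReal ‖z‖ from (ofReal_norm z).symm, ← ENNReal.ofReal_inv_of_pos hz']

lemma integrable_hess_integrand {d : ℕ} {Ω : Type*} [MeasurableSpace Ω] (P : Measure Ω)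
    {f : Ω → Mat d} (hf : Measurable f) (V : Mat d) {c : ℝ≥0∞} (hct : c ≠ ⊤)
    (hI : (∫⁻ ω, (‖f ω‖₊ : ℝ≥0∞)⁻¹ ∂P) ≤ c) :
    Integrable (fun ω => ‖f ω‖⁻¹ • (V - (‖f ω‖ ^ 2)⁻¹ • ((⟪f ω, V⟫) • f ω))) P := by
  have hinv : Integrable (fun ω => ‖f ω‖⁻¹) P := by
    refine ⟨(hf.norm.inv).aestronglyMeasurable, ?_⟩
    rw [hasFiniteIntegral_iff_ofReal (ae_of_all _ fun ω => by positivity)]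
    calc ∫⁻ ω, ENNReal.ofReal (‖f ω‖⁻¹) ∂P ≤ ∫⁻ ω, (‖f ω‖₊ : ℝ≥0∞)⁻¹ ∂P :=
          lintegral_mono fun ω => ofReal_inv_norm_le (f ω)
      _ ≤ c := hI
      _ < ⊤ := hct.lt_top
  refine Integrable.mono' (hinv.const_mul (2 * ‖V‖))
    ((measurable_Fmap V).comp hf).aestronglyMeasurable ?_
  exact ae_of_all _ fun ω => norm_Fmap_le (f ω) V

lemma rpow_two_inv (x : ℝ≥0∞) : x⁻¹ ^ (2:ℝ) = (x ^ 2)⁻¹ := by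
  rw [show (2:ℝ) = ((2:ℕ):ℝ) from by norm_num, ENNReal.rpow_natCast, ENNReal.inv_pow]

/-- Lipschitz bound in the location parameter for the Hessian of `G` at `Γ_m`:
`‖(∇²G_{m+h}(Γ_m) − ∇²G_m(Γ_m))(V)‖_F ≤ 12(C√‖Γ_m‖_F + C^{3/4})‖h‖‖V‖_F`. -/
theorem stmt_8
    {d : ℕ} (hd : 1 ≤ d) (P : Measure Ω) [IsProbabilityMeasure P]
    (X : Ω → EuclideanSpace ℝ (Fin d)) (hX : Measurable X)
    -- `m` is the geometric median of `X`: the unique minimizer of `u ↦ E[‖X − u‖ − ‖X‖]`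
    (m : EuclideanSpace ℝ (Fin d))
    (hm : ∀ u, (∫ ω, (‖X ω - m‖ - ‖X ω‖) ∂P) ≤ ∫ ω, (‖X ω - u‖ - ‖X ω‖) ∂P)
    (hm_unique : ∀ u, (∀ v, (∫ ω, (‖X ω - u‖ - ‖X ω‖) ∂P) ≤
      ∫ ω, (‖X ω - v‖ - ‖X ω‖) ∂P) → u = m)
    -- `Γ` is the median covariation matrix: the unique minimizer of `G_m`
    (Γ : Mat d)
    (hΓ : ∀ V, Gfun P X m Γ ≤ Gfun P X m V)
    (hΓ_unique : ∀ V, (∀ W, Gfun P X m V ≤ Gfun P X m W) → V = Γ)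
    -- Assumption 1
    (hA1 : ∃ u₁ u₂ : EuclideanSpace ℝ (Fin d), ‖u₁‖ = 1 ∧ ‖u₂‖ = 1 ∧
      LinearIndependent ℝ ![u₁, u₂] ∧
      0 < evariance (fun ω => ⟪u₁, X ω⟫) P ∧ 0 < evariance (fun ω => ⟪u₂, X ω⟫) P)
    -- Assumption 2
    (hA2 : ∃ V₁ V₂ : Mat d, ‖V₁‖ = 1 ∧ ‖V₂‖ = 1 ∧ LinearIndependent ℝ ![V₁, V₂] ∧
      0 < evariance (fun ω => ⟪V₁, Ymat (X ω) m⟫) P ∧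
      0 < evariance (fun ω => ⟪V₂, Ymat (X ω) m⟫) P)
    -- Assumption 3(b)
    (C : ℝ) (hC : 0 < C)
    (hA3 : ∀ (h : EuclideanSpace ℝ (Fin d)) (V : Mat d),
      (∫⁻ ω, (‖Ymat (X ω) h - V‖₊ : ℝ≥0∞)⁻¹ ∂P) ≤ ENNReal.ofReal C ∧
      (∫⁻ ω, ((‖Ymat (X ω) h - V‖₊ : ℝ≥0∞) ^ 2)⁻¹ ∂P) ≤ ENNReal.ofReal C)
    :
    ∀ (h : EuclideanSpace ℝ (Fin d)) (V : Mat d),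
      ‖hessG P X (m + h) Γ V - hessG P X m Γ V‖ ≤
        12 * (C * Real.sqrt ‖Γ‖ + C ^ ((3 : ℝ) / 4)) * ‖h‖ * ‖V‖ := by
  intro h V
  set c : ℝ≥0∞ := ENNReal.ofReal C with hc_def
  have hc0 : c ≠ 0 := (ENNReal.ofReal_pos.mpr hC).ne'
  have hct : c ≠ ⊤ := ENNReal.ofReal_ne_top
  -- the two integrands
  set F₁ : Ω → Mat d := fun ω => ‖Ymat (X ω) (m + h) - Γ‖⁻¹ •
    (V - (‖Ymat (X ω) (m + h) - Γ‖ ^ 2)⁻¹ •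
      ((⟪Ymat (X ω) (m + h) - Γ, V⟫) • (Ymat (X ω) (m + h) - Γ))) with hF₁_def
  set F₀ : Ω → Mat d := fun ω => ‖Ymat (X ω) m - Γ‖⁻¹ •
    (V - (‖Ymat (X ω) m - Γ‖ ^ 2)⁻¹ •
      ((⟪Ymat (X ω) m - Γ, V⟫) • (Ymat (X ω) m - Γ))) with hF₀_def
  -- measurability
  have hmU : Measurable fun ω => Ymat (X ω) (m + h) - Γ :=
    (((continuous_Ymat (m + h)).measurable).comp hX).sub measurable_const
  have hmW : Measurable fun ω => Ymat (X ω) m - Γ :=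
    (((continuous_Ymat m).measurable).comp hX).sub measurable_const
  set a : Ω → ℝ≥0∞ := fun ω => ((‖Ymat (X ω) (m + h) - Γ‖₊ : ℝ≥0∞))⁻¹ with ha_def
  set b : Ω → ℝ≥0∞ := fun ω => ((‖Ymat (X ω) m - Γ‖₊ : ℝ≥0∞))⁻¹ with hb_def
  have hma : Measurable a := hmU.nnnorm.coe_nnreal_ennreal.inv
  have hmb : Measurable b := hmW.nnnorm.coe_nnreal_ennreal.inv
  -- assumption 3 facts
  have haI : ∫⁻ ω, a ω ∂P ≤ c := (hA3 (m + h) Γ).1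
  have hbI : ∫⁻ ω, b ω ∂P ≤ c := (hA3 m Γ).1
  have ha2 : ∫⁻ ω, (a ω) ^ (2:ℝ) ∂P ≤ c := by
    refine le_trans (le_of_eq (lintegral_congr fun ω => ?_)) (hA3 (m + h) Γ).2
    exact rpow_two_inv _
  have hb2 : ∫⁻ ω, (b ω) ^ (2:ℝ) ∂P ≤ c := by
    refine le_trans (le_of_eq (lintegral_congr fun ω => ?_)) (hA3 m Γ).2
    exact rpow_two_inv _
  -- integrability
  have hIntU : Integrable F₁ P := integrable_hess_integrand P hmU V hct haI
  have hIntW : Integrable F₀ P := integrable_hess_integrand P hmW V hct hbI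
  -- a.e. nonvanishing
  have haeU : ∀ᵐ ω ∂P, Ymat (X ω) (m + h) - Γ ≠ 0 := by
    filter_upwards [ae_lt_top hma (haI.trans_lt hct.lt_top).ne] with ω hω
    intro h0
    rw [ha_def] at hω
    simp only [h0, nnnorm_zero] at hω
    simp at hω
  have haeW : ∀ᵐ ω ∂P, Ymat (X ω) m - Γ ≠ 0 := by
    filter_upwards [ae_lt_top hmb (hbI.trans_lt hct.lt_top).ne] with ω hω
    intro h0
    rw [hb_def] at hω
    simp only [h0, nnnorm_zero] at hω
    simp at hω
  have hg : (0:ℝ) ≤ Real.sqrt ‖Γ‖ := Real.sqrt_nonneg _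
  -- Hölder bounds
  have hI1 : ∫⁻ ω, (a ω) ^ ((1:ℝ)/2) * b ω ∂P ≤ c ^ ((3:ℝ)/4) :=
    holder_34 P hma hmb hc0 hct ha2 hb2
  have hI2 : ∫⁻ ω, a ω * (b ω) ^ ((1:ℝ)/2) ∂P ≤ c ^ ((3:ℝ)/4) := by
    have := holder_34 P hmb hma hc0 hct hb2 ha2
    rwa [lintegral_congr fun ω => mul_comm (a ω) ((b ω) ^ ((1:ℝ)/2))]
  have hI3 : ∫⁻ ω, a ω * b ω ∂P ≤ c := holder_22 P hma hmb hc0 hct ha2 hb2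
  -- main chain
  calc ‖hessG P X (m + h) Γ V - hessG P X m Γ V‖
      = ‖∫ ω, (F₁ ω - F₀ ω) ∂P‖ := by
        rw [show hessG P X (m + h) Γ V = ∫ ω, F₁ ω ∂P from rfl,
          show hessG P X m Γ V = ∫ ω, F₀ ω ∂P from rfl, integral_sub hIntU hIntW]
    _ ≤ (∫⁻ ω, ENNReal.ofReal ‖F₁ ω - F₀ ω‖ ∂P).toReal :=
        norm_integral_le_lintegral_norm _
    _ ≤ (ENNReal.ofReal (12 * (C * Real.sqrt ‖Γ‖ + C ^ ((3:ℝ)/4)) * ‖h‖ * ‖V‖)).toReal := by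
        apply ENNReal.toReal_mono ENNReal.ofReal_ne_top
        calc ∫⁻ ω, ENNReal.ofReal ‖F₁ ω - F₀ ω‖ ∂P
            ≤ ∫⁻ ω, ENNReal.ofReal (6 * ‖h‖ * ‖V‖) *
              ((a ω) ^ ((1:ℝ)/2) * b ω + a ω * (b ω) ^ ((1:ℝ)/2) +
                ENNReal.ofReal (2 * Real.sqrt ‖Γ‖) * (a ω * b ω)) ∂P := by
              apply lintegral_mono_ae
              filter_upwards [haeU, haeW] with ω h1 h2
              exact pointwise_bound (X ω) m h Γ V h1 h2
          _ = ENNReal.ofReal (6 * ‖h‖ * ‖V‖) *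
              ((∫⁻ ω, (a ω) ^ ((1:ℝ)/2) * b ω ∂P) + (∫⁻ ω, a ω * (b ω) ^ ((1:ℝ)/2) ∂P) +
                ENNReal.ofReal (2 * Real.sqrt ‖Γ‖) * ∫⁻ ω, a ω * b ω ∂P) := by
              have m1 : Measurable fun ω => (a ω) ^ ((1:ℝ)/2) * b ω :=
                ((ENNReal.continuous_rpow_const.measurable).comp hma).mul hmb
              have m2 : Measurable fun ω => a ω * (b ω) ^ ((1:ℝ)/2) :=
                hma.mul ((ENNReal.continuous_rpow_const.measurable).comp hmb)
              have m3 : Measurable fun ω => a ω * b ω := hma.mul hmb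
              rw [lintegral_const_mul _ (show Measurable fun ω => (a ω) ^ ((1:ℝ)/2) * b ω +
                  a ω * (b ω) ^ ((1:ℝ)/2) + ENNReal.ofReal (2 * Real.sqrt ‖Γ‖) * (a ω * b ω) from
                  (m1.add m2).add (m3.const_mul _)),
                lintegral_add_left (show Measurable fun ω => (a ω) ^ ((1:ℝ)/2) * b ω +
                  a ω * (b ω) ^ ((1:ℝ)/2) from m1.add m2), lintegral_add_left m1,
                lintegral_const_mul _ m3]
          _ ≤ ENNReal.ofReal (6 * ‖h‖ * ‖V‖) *
              (c ^ ((3:ℝ)/4) + c ^ ((3:ℝ)/4) + ENNReal.ofReal (2 * Real.sqrt ‖Γ‖) * c) := by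
              exact mul_le_mul' le_rfl
                (add_le_add (add_le_add hI1 hI2) (mul_le_mul' le_rfl hI3))
          _ = ENNReal.ofReal (12 * (C * Real.sqrt ‖Γ‖ + C ^ ((3:ℝ)/4)) * ‖h‖ * ‖V‖) := by
              rw [hc_def, ENNReal.ofReal_rpow_of_pos hC,
                ← ENNReal.ofReal_mul (by positivity),
                ← ENNReal.ofReal_add (by positivity) (by positivity),
                ← ENNReal.ofReal_add (by positivity) (by positivity),
                ← ENNReal.ofReal_mul (by positivity)]
              congr 1
              ring
    _ = 12 * (C * Real.sqrt ‖Γ‖ + C ^ ((3:ℝ)/4)) * ‖h‖ * ‖V‖ :=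
        ENNReal.toReal_ofReal (by positivity)
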